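/- If r: B→A is a weak deformation map in the quasi-twilled associative algebra A⊕B, then A is a bimodule over the associative algebra (B, ·_r) via x⇀_r a := x⇀a + r(x)·_A a − r(x◁a) − r(θ(r(x),a)) and a↼_r x := a↼x + a·_A r(x) − r(a▷x) − r(θ(a,r(x))); that is, for all x,y ∈ B and a ∈ A one has (x·_r y)⇀_r a = x⇀_r(y⇀_r a), a↼_r(x·_r y) = (a↼_r x)↼_r y, and (x⇀_r a)↼_r y = x⇀_r(a↼_r y), where x·_r y := x·_B y + r(x)▷y + x◁r(y) + θ(r(x),r(y)). -/

import Mathlib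

variable {k A B : Type*} [Field k] [AddCommGroup A] [Module k A] [AddCommGroup B] [Module k B]

/-- The multiplication of the quasi-twilled associative algebra `A ⊕ B`:
`(a,x)·(b,y) = (a·_A b + a↼y + x⇀b, x·_B y + a▷y + x◁b + θ(a,b))`. -/
def qtMul (μ : A →ₗ[k] A →ₗ[k] A) (ν : B →ₗ[k] B →ₗ[k] B)
    (tr : A →ₗ[k] B →ₗ[k] B) (tl : B →ₗ[k] A →ₗ[k] B)
    (hr : B →ₗ[k] A →ₗ[k] A) (hl : A →ₗ[k] B →ₗ[k] A)
    (θ : A →ₗ[k] A →ₗ[k] B) (p q : A × B) : A × B :=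
  (μ p.1 q.1 + hl p.1 q.2 + hr p.2 q.1,
   ν p.2 q.2 + tr p.1 q.2 + tl p.2 q.1 + θ p.1 q.1)

/-- `x ·_r y := x·_B y + r(x)▷y + x◁r(y) + θ(r(x),r(y))`. -/
def nuR (ν : B →ₗ[k] B →ₗ[k] B) (tr : A →ₗ[k] B →ₗ[k] B) (tl : B →ₗ[k] A →ₗ[k] B)
    (θ : A →ₗ[k] A →ₗ[k] B) (r : B →ₗ[k] A) (x y : B) : B :=
  ν x y + tr (r x) y + tl x (r y) + θ (r x) (r y)

/-- `x ⇀_r a := x⇀a + r(x)·_A a − r(x◁a) − r(θ(r(x),a))`. -/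
def hrR (μ : A →ₗ[k] A →ₗ[k] A) (tl : B →ₗ[k] A →ₗ[k] B) (hr : B →ₗ[k] A →ₗ[k] A)
    (θ : A →ₗ[k] A →ₗ[k] B) (r : B →ₗ[k] A) (x : B) (a : A) : A :=
  hr x a + μ (r x) a - r (tl x a) - r (θ (r x) a)

/-- `a ↼_r x := a↼x + a·_A r(x) − r(a▷x) − r(θ(a,r(x)))`. -/
def hlR (μ : A →ₗ[k] A →ₗ[k] A) (tr : A →ₗ[k] B →ₗ[k] B) (hl : A →ₗ[k] B →ₗ[k] A)
    (θ : A →ₗ[k] A →ₗ[k] B) (r : B →ₗ[k] A) (a : A) (x : B) : A :=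
  hl a x + μ a (r x) - r (tr a x) - r (θ a (r x))

section Aux

variable (μ : A →ₗ[k] A →ₗ[k] A) (ν : B →ₗ[k] B →ₗ[k] B)
    (tr : A →ₗ[k] B →ₗ[k] B) (tl : B →ₗ[k] A →ₗ[k] B)
    (hr : B →ₗ[k] A →ₗ[k] A) (hl : A →ₗ[k] B →ₗ[k] A)
    (θ : A →ₗ[k] A →ₗ[k] B) (r : B →ₗ[k] A)

/-- `Φ(a,x) = (a + r x, x)`. -/
def auxPhi (p : A × B) : A × B := (p.1 + r p.2, p.2)

/-- `Ψ(a,x) = (a - r x, x)`, inverse of `Φ`. -/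
def auxPsi (p : A × B) : A × B := (p.1 - r p.2, p.2)

/-- The multiplication transported along `Φ`. -/
def auxMul (p q : A × B) : A × B :=
  auxPsi r (qtMul μ ν tr tl hr hl θ (auxPhi r p) (auxPhi r q))

lemma auxPhi_auxPsi (p : A × B) : auxPhi r (auxPsi r p) = p := by
  simp [auxPhi, auxPsi]

lemma auxMul_assoc
    (hA : ∀ p q s : A × B,
        qtMul μ ν tr tl hr hl θ (qtMul μ ν tr tl hr hl θ p q) s =
          qtMul μ ν tr tl hr hl θ p (qtMul μ ν tr tl hr hl θ q s))
    (p q s : A × B) :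
    auxMul μ ν tr tl hr hl θ r (auxMul μ ν tr tl hr hl θ r p q) s =
      auxMul μ ν tr tl hr hl θ r p (auxMul μ ν tr tl hr hl θ r q s) := by
  unfold auxMul
  rw [auxPhi_auxPsi, auxPhi_auxPsi, hA]

lemma auxMul_xx (hr' : ∀ x y : B,
        μ (r x) (r y) + hl (r x) y + hr x (r y) =
          r (ν x y + tr (r x) y + tl x (r y) + θ (r x) (r y)))
    (x y : B) :
    auxMul μ ν tr tl hr hl θ r (0, x) (0, y) = (0, nuR ν tr tl θ r x y) := by
  have h := hr' x y
  simp only [auxMul, auxPhi, auxPsi, qtMul, nuR, zero_add]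
  exact Prod.ext (sub_eq_zero_of_eq h) rfl

lemma auxMul_xa (x : B) (a : A) :
    auxMul μ ν tr tl hr hl θ r (0, x) (a, 0) =
      (hrR μ tl hr θ r x a, tl x a + θ (r x) a) := by
  simp only [auxMul, auxPhi, auxPsi, qtMul, hrR, zero_add, add_zero, map_zero, map_add, LinearMap.zero_apply]
  simp only [Prod.mk.injEq, LinearMap.zero_apply]
  exact ⟨by abel, trivial⟩

lemma auxMul_ax (a : A) (y : B) :
    auxMul μ ν tr tl hr hl θ r (a, 0) (0, y) =
      (hlR μ tr hl θ r a y, tr a y + θ a (r y)) := by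
  simp only [auxMul, auxPhi, auxPsi, qtMul, hlR, zero_add, add_zero, map_zero, map_add, LinearMap.zero_apply]
  simp only [Prod.mk.injEq, LinearMap.zero_apply]
  exact ⟨by abel, trivial⟩

lemma auxMul_add_right (p q q' : A × B) :
    auxMul μ ν tr tl hr hl θ r p (q + q') =
      auxMul μ ν tr tl hr hl θ r p q + auxMul μ ν tr tl hr hl θ r p q' := by
  simp only [auxMul, auxPhi, auxPsi, qtMul, Prod.fst_add, Prod.snd_add, map_add,
    LinearMap.add_apply, Prod.mk_add_mk]
  simp only [Prod.mk.injEq, LinearMap.zero_apply]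
  constructor <;> abel

lemma auxMul_add_left (p p' q : A × B) :
    auxMul μ ν tr tl hr hl θ r (p + p') q =
      auxMul μ ν tr tl hr hl θ r p q + auxMul μ ν tr tl hr hl θ r p' q := by
  simp only [auxMul, auxPhi, auxPsi, qtMul, Prod.fst_add, Prod.snd_add, map_add,
    LinearMap.add_apply, Prod.mk_add_mk]
  simp only [Prod.mk.injEq, LinearMap.zero_apply]
  constructor <;> abel

end Aux

/-- if `r` is a weak deformation map, then `(A, ⇀_r, ↼_r)` is a bimodule
over the associative algebra `(B, ·_r)`. -/
theorem weakDeformationMap_bimodule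
    (μ : A →ₗ[k] A →ₗ[k] A) (ν : B →ₗ[k] B →ₗ[k] B)
    (tr : A →ₗ[k] B →ₗ[k] B) (tl : B →ₗ[k] A →ₗ[k] B)
    (hr : B →ₗ[k] A →ₗ[k] A) (hl : A →ₗ[k] B →ₗ[k] A)
    (θ : A →ₗ[k] A →ₗ[k] B)
    (hA : ∀ p q s : A × B,
        qtMul μ ν tr tl hr hl θ (qtMul μ ν tr tl hr hl θ p q) s =
          qtMul μ ν tr tl hr hl θ p (qtMul μ ν tr tl hr hl θ q s))
    (r : B →ₗ[k] A)
    (hr' : ∀ x y : B,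
        μ (r x) (r y) + hl (r x) y + hr x (r y) =
          r (ν x y + tr (r x) y + tl x (r y) + θ (r x) (r y))) :
    ∀ (x y : B) (a : A),
      hrR μ tl hr θ r (nuR ν tr tl θ r x y) a = hrR μ tl hr θ r x (hrR μ tl hr θ r y a) ∧
      hlR μ tr hl θ r a (nuR ν tr tl θ r x y) = hlR μ tr hl θ r (hlR μ tr hl θ r a x) y ∧
      hlR μ tr hl θ r (hrR μ tl hr θ r x a) y = hrR μ tl hr θ r x (hlR μ tr hl θ r a y) := by
  intro x y a
  have assoc := auxMul_assoc μ ν tr tl hr hl θ r hA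
  have hxx := auxMul_xx μ ν tr tl hr hl θ r hr'
  have hxa := auxMul_xa μ ν tr tl hr hl θ r
  have hax := auxMul_ax μ ν tr tl hr hl θ r
  have haddr := auxMul_add_right μ ν tr tl hr hl θ r
  have haddl := auxMul_add_left μ ν tr tl hr hl θ r
  refine ⟨?_, ?_, ?_⟩
  · have h := assoc (0, x) (0, y) (a, 0)
    rw [hxx x y, hxa y a,
      show ((hrR μ tl hr θ r y a, tl y a + θ (r y) a) : A × B)
        = (hrR μ tl hr θ r y a, 0) + (0, tl y a + θ (r y) a) by simp,
      haddr, hxa, hxa, hxx] at h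
    have h1 := congrArg Prod.fst h
    simpa using h1
  · have h := assoc (a, 0) (0, x) (0, y)
    rw [hxx x y, hax a x,
      show ((hlR μ tr hl θ r a x, tr a x + θ a (r x)) : A × B)
        = (hlR μ tr hl θ r a x, 0) + (0, tr a x + θ a (r x)) by simp,
      haddl, hax, hax, hxx] at h
    have h1 := congrArg Prod.fst h
    simpa using h1.symm
  · have h := assoc (0, x) (a, 0) (0, y)
    rw [hxa x a, hax a y,
      show ((hrR μ tl hr θ r x a, tl x a + θ (r x) a) : A × B)
        = (hrR μ tl hr θ r x a, 0) + (0, tl x a + θ (r x) a) by simp,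
      show ((hlR μ tr hl θ r a y, tr a y + θ a (r y)) : A × B)
        = (hlR μ tr hl θ r a y, 0) + (0, tr a y + θ a (r y)) by simp,
      haddl, haddr, hax, hxx, hxa, hxx] at h
    have h1 := congrArg Prod.fst h
    simpa using h1
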